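/- Let γ ∈ (0,1) and let φ : ℍ → ℂ be injective holomorphic with φ(ℍ) ⊂ {z : |z| > e^γ}, satisfying condition (4.2) with constant M ≥ 1 and threshold γ, and suppose there exists a holomorphic L : ℍ → ℂ with exp∘L = φ. Assume φ satisfies a balanced growth condition: there exist ρ > 0 and constants 0 < c ≤ C such that c·|φ(ξ)|^{1−ρ} ≤ |φ′(ξ)| ≤ C·|φ(ξ)|^{1−ρ} for every ξ ∈ ℍ. Then β_∞(t) = 0 for every t ∈ ℝ; consequently b_∞(t) = 1 − t for all t, and Θ = 1. -/

import Mathlib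

open Complex Set Filter Topology MeasureTheory

noncomputable section

/-- The open right half-plane `ℍ = {z ∈ ℂ : Re z > 0}`. -/
def HalfPlane : Set ℂ := {z : ℂ | 0 < z.re}

/-- The open rectangle `Q_T = {ξ ∈ ℂ : 0 < Re ξ < 4T and −4T < Im ξ < 4T}`. -/
def Q (T : ℝ) : Set ℂ := {z : ℂ | 0 < z.re ∧ z.re < 4 * T ∧ -(4 * T) < z.im ∧ z.im < 4 * T}

/-- Condition (4.2) with constant `M` and threshold `γ`:
`|φ(ξ)| ≤ M·|φ(ξ′)|` for every `T ≥ γ` and all `ξ, ξ′ ∈ Q_T \ Q_{T/8}`. -/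
def Cond42 (φ : ℂ → ℂ) (M γ : ℝ) : Prop :=
  ∀ T : ℝ, γ ≤ T → ∀ ξ ∈ Q T \ Q (T / 8), ∀ ξ' ∈ Q T \ Q (T / 8),
    ‖φ ξ‖ ≤ M * ‖φ ξ'‖

/-- The rescaled map `φ_T(z) = φ(Tz)/|φ(T)|`. -/
def resc (φ : ℂ → ℂ) (T : ℝ) : ℂ → ℂ :=
  fun z => φ ((T : ℂ) * z) / ((‖φ (T : ℂ)‖ : ℝ) : ℂ)

/-- The set `I = [−2,−1] ∪ [1,2]`. -/
def Iset : Set ℝ := Icc (-2 : ℝ) (-1) ∪ Icc (1 : ℝ) 2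

/-- The integral means `β_{φ_T}(r,t) = log(∫_I |φ_T′(r+iy)|^t dy) / log(1/r)`. -/
def betaT (φ : ℂ → ℂ) (T r t : ℝ) : ℝ :=
  Real.log (∫ y in Iset,
      (‖deriv (resc φ T) ((r : ℂ) + (y : ℂ) * Complex.I)‖) ^ t) /
    Real.log (1 / r)

/-- The integral means spectrum at infinity `β_∞(t) = limsup_{T→+∞} β_{φ_T}(1/T, t)`. -/
def betaInf (φ : ℂ → ℂ) (t : ℝ) : ℝ :=
  Filter.limsup (fun T : ℝ => betaT φ T (1 / T) t) Filter.atTop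

/-- The function `b_∞(t) = β_∞(t) − t + 1`. -/
def bInf (φ : ℂ → ℂ) (t : ℝ) : ℝ := betaInf φ t - t + 1

/-- `Θ = inf{t > 0 : b_∞(t) ≤ 0}`. -/
def Theta (φ : ℂ → ℂ) : ℝ := sInf {t : ℝ | 0 < t ∧ bInf φ t ≤ 0}

lemma hp_open : IsOpen HalfPlane := isOpen_lt continuous_const Complex.continuous_re

lemma hp_convex : Convex ℝ HalfPlane := convex_halfSpace_re_gt 0

lemma ball_subset_hp {T : ℝ} (hT : 0 < T) : Metric.ball (T : ℂ) T ⊆ HalfPlane := by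
  intro z hz
  simp only [Metric.mem_ball, Complex.dist_eq] at hz
  have h1 : |(T : ℝ) - z.re| ≤ ‖(T : ℂ) - z‖ := by
    simpa using Complex.abs_re_le_norm ((T : ℂ) - z)
  have : (T : ℝ) - z.re < T := lt_of_le_of_lt (le_trans (le_abs_self _) h1)
    (by rwa [← Complex.dist_eq, dist_comm, Complex.dist_eq] at hz)
  simpa [HalfPlane] using by linarith

lemma psi_abs_lt {γ : ℝ} {a w : ℂ} (ha : γ < a.re) (hw : γ < w.re) :
    ‖(w - a) / (w + (starRingEnd ℂ) a - 2 * (γ : ℂ))‖ < 1 := by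
  have hden_re : 0 < (w + (starRingEnd ℂ) a - 2 * (γ : ℂ)).re := by
    simp [Complex.add_re, Complex.sub_re, Complex.conj_re]
    linarith
  have hden : w + (starRingEnd ℂ) a - 2 * (γ : ℂ) ≠ 0 := by
    intro h; rw [h] at hden_re; simp at hden_re
  rw [norm_div, div_lt_one (norm_pos_iff.2 hden)]
  have hsq : (‖w - a‖)^2 < (‖w + (starRingEnd ℂ) a - 2 * (γ:ℂ)‖)^2 := by
    rw [Complex.sq_norm, Complex.sq_norm, Complex.normSq_apply, Complex.normSq_apply]
    simp only [Complex.sub_re, Complex.sub_im, Complex.add_re, Complex.add_im,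
      Complex.conj_re, Complex.conj_im, Complex.mul_re, Complex.mul_im,
      Complex.ofReal_re, Complex.ofReal_im, Complex.re_ofNat, Complex.im_ofNat]
    nlinarith [mul_pos (sub_pos.2 ha) (sub_pos.2 hw)]
  have := norm_nonneg (w - a)
  nlinarith [norm_pos_iff.2 hden]

lemma schwarz_step {γ : ℝ} {L : ℂ → ℂ} (hγ : 0 < γ)
    (hLd : DifferentiableOn ℂ L HalfPlane)
    (hre : ∀ z ∈ HalfPlane, γ < (L z).re)
    {T : ℝ} (hT : 0 < T) :
    ‖deriv L (T : ℂ)‖ ≤ 2 * (L (T : ℂ)).re / T := by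
  have hTmem : (T : ℂ) ∈ HalfPlane := by simp [HalfPlane, hT]
  set a := L (T : ℂ) with ha_def
  have ha : γ < a.re := hre _ hTmem
  set ψ : ℂ → ℂ := fun w => (w - a) / (w + (starRingEnd ℂ) a - 2 * (γ : ℂ)) with hψ_def
  have hne : ∀ w : ℂ, γ < w.re → w + (starRingEnd ℂ) a - 2 * (γ : ℂ) ≠ 0 := by
    intro w hw h
    have : (w + (starRingEnd ℂ) a - 2 * (γ : ℂ)).re = 0 := by rw [h]; simp
    simp only [Complex.sub_re, Complex.add_re, Complex.conj_re, Complex.mul_re,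
      Complex.re_ofNat, Complex.im_ofNat, Complex.ofReal_re, Complex.ofReal_im] at this
    nlinarith
  have hdiff : DifferentiableOn ℂ (ψ ∘ L) (Metric.ball (T : ℂ) T) := by
    intro z hz
    have hz' := ball_subset_hp hT hz
    have hLz : DifferentiableAt ℂ L z := hLd.differentiableAt (hp_open.mem_nhds hz')
    have hψz : DifferentiableAt ℂ ψ (L z) := by
      apply DifferentiableAt.div
      · exact differentiableAt_id.sub_const _
      · exact (differentiableAt_id.add_const _).sub_const _
      · exact hne _ (hre z hz')
    exact (hψz.comp z hLz).differentiableWithinAt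
  have hF0 : (ψ ∘ L) (T : ℂ) = 0 := by simp [hψ_def, ← ha_def]
  have hmaps : MapsTo (ψ ∘ L) (Metric.ball (T : ℂ) T)
      (Metric.ball ((ψ ∘ L) (T : ℂ)) 1) := by
    intro z hz
    rw [hF0, Metric.mem_ball, dist_zero_right]
    exact psi_abs_lt ha (hre z (ball_subset_hp hT hz))
  have hSch := Complex.norm_deriv_le_div_of_mapsTo_ball hdiff (hmaps.mono_right Metric.ball_subset_closedBall) hT
  have hL' : HasDerivAt L (deriv L (T : ℂ)) (T : ℂ) :=
    (hLd.differentiableAt (hp_open.mem_nhds hTmem)).hasDerivAt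
  have hne' : a + (starRingEnd ℂ) a - 2 * (γ : ℂ) ≠ 0 := hne _ ha
  have hnum : HasDerivAt (fun w : ℂ => w - a) 1 a := (hasDerivAt_id a).sub_const a
  have hden' : HasDerivAt (fun w : ℂ => w + (starRingEnd ℂ) a - 2 * (γ : ℂ)) 1 a :=
    ((hasDerivAt_id a).add_const _).sub_const _
  have hψ' : HasDerivAt ψ
      ((1 * (a + (starRingEnd ℂ) a - 2 * (γ : ℂ)) - (a - a) * 1) /
        (a + (starRingEnd ℂ) a - 2 * (γ : ℂ)) ^ 2) a := hnum.div hden' hne'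
  have hcomp := hψ'.comp (T : ℂ) hL'
  have hderivF := hcomp.deriv
  rw [hderivF] at hSch
  have hconj : a + (starRingEnd ℂ) a - 2 * (γ : ℂ) = ((2 * (a.re - γ) : ℝ) : ℂ) := by
    rw [Complex.add_conj]; push_cast; ring
  have habs : ‖(1 * (a + (starRingEnd ℂ) a - 2 * (γ : ℂ)) - (a - a) * 1) /
      (a + (starRingEnd ℂ) a - 2 * (γ : ℂ)) ^ 2‖ = 1 / (2 * (a.re - γ)) := by
    rw [sub_self, zero_mul, sub_zero, one_mul, hconj]
    rw [norm_div, norm_pow, Complex.norm_real, Real.norm_eq_abs, abs_of_pos (by linarith)]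
    rw [sq]
    field_simp
  rw [norm_mul, habs] at hSch
  have h2 : 0 < 2 * (a.re - γ) := by linarith
  rw [div_mul_eq_mul_div, div_le_div_iff₀ h2 hT, one_mul] at hSch
  rw [one_mul] at hSch
  rw [le_div_iff₀ hT]
  nlinarith [norm_nonneg (deriv L (T : ℂ))]

lemma rpow_ratio_bound {x P M e : ℝ} (hx : 0 < x) (hP : 0 < P) (hM : 1 ≤ M)
    (h1 : x ≤ M * P) (h2 : P ≤ M * x) :
    M ^ (-|e|) * P ^ e ≤ x ^ e ∧ x ^ e ≤ M ^ |e| * P ^ e := by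
  have hM0 : 0 < M := lt_of_lt_of_le one_pos hM
  rcases le_or_gt 0 e with he | he
  · rw [_root_.abs_of_nonneg he]
    constructor
    · have : P ^ e ≤ (M * x) ^ e := Real.rpow_le_rpow hP.le h2 he
      rw [Real.mul_rpow hM0.le hx.le] at this
      rw [Real.rpow_neg hM0.le]
      rw [inv_mul_le_iff₀ (by positivity)]
      calc P ^ e ≤ M ^ e * x ^ e := this
        _ = M ^ e * x ^ e := rfl
    · have : x ^ e ≤ (M * P) ^ e := Real.rpow_le_rpow hx.le h1 he
      rwa [Real.mul_rpow hM0.le hP.le] at this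
  · rw [abs_of_neg he, neg_neg]
    constructor
    · have hlt : 0 < M * P := by positivity
      have : (M * P) ^ e ≤ x ^ e := Real.rpow_le_rpow_of_nonpos hx h1 he.le
      rwa [Real.mul_rpow hM0.le hP.le] at this
    · have hPM : P / M ≤ x := by rw [div_le_iff₀ hM0]; nlinarith
      have hPM0 : 0 < P / M := by positivity
      have : x ^ e ≤ (P / M) ^ e := Real.rpow_le_rpow_of_nonpos hPM0 hPM he.le
      rw [Real.div_rpow hP.le hM0.le] at this
      rw [Real.rpow_neg hM0.le]
      calc x ^ e ≤ P ^ e / M ^ e := this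
        _ = (M ^ e)⁻¹ * P ^ e := by ring

lemma iset_compact : IsCompact Iset := isCompact_Icc.union isCompact_Icc
lemma iset_meas : MeasurableSet Iset := measurableSet_Icc.union measurableSet_Icc
lemma iset_volume : (volume Iset).toReal = 2 := by
  have hdisj : Disjoint (Icc (-2 : ℝ) (-1)) (Icc (1 : ℝ) 2) := by
    apply Set.disjoint_left.2
    intro x hx hx'
    simp only [mem_Icc] at hx hx'
    linarith [hx.2, hx'.1]
  rw [Iset, measure_union hdisj measurableSet_Icc]
  rw [Real.volume_Icc, Real.volume_Icc]
  norm_num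

lemma rpow_one_sub_div {x ρ : ℝ} (hx : 0 < x) : x ^ (1 - ρ) / x = x ^ (-ρ) := by
  rw [show (1 - ρ : ℝ) = -ρ + 1 by ring, Real.rpow_add hx, Real.rpow_one,
    mul_div_assoc, div_self hx.ne', mul_one]

lemma log_ratio_tendsto (K₁ : ℝ) :
    Tendsto (fun T : ℝ => Real.log (K₁ + Real.log T) / Real.log T) atTop (𝓝 0) := by
  have h0 : Tendsto (fun x : ℝ => Real.log x / x) atTop (𝓝 0) :=
    Real.isLittleO_log_id_atTop.tendsto_div_nhds_zero
  have h1 : Tendsto (fun y : ℝ => K₁ + y) atTop atTop :=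
    tendsto_atTop_add_const_left atTop K₁ tendsto_id
  have h2 : Tendsto (fun y : ℝ => Real.log (K₁ + y) / (K₁ + y)) atTop (𝓝 0) := h0.comp h1
  have h3 : Tendsto (fun y : ℝ => K₁ / y) atTop (𝓝 0) :=
    tendsto_const_nhds.div_atTop tendsto_id
  have h4 : Tendsto (fun y : ℝ => (K₁ + y) / y) atTop (𝓝 1) := by
    have : Tendsto (fun y : ℝ => K₁ / y + 1) atTop (𝓝 (0 + 1)) := h3.add tendsto_const_nhds
    rw [zero_add] at this
    apply this.congr'
    filter_upwards [eventually_ne_atTop 0] with y hy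
    field_simp
  have h5 : Tendsto (fun y : ℝ => Real.log (K₁ + y) / y) atTop (𝓝 0) := by
    have := h2.mul h4
    rw [mul_one] at this
    apply this.congr'
    filter_upwards [eventually_ne_atTop 0, eventually_gt_atTop (max 0 (-K₁))] with y hy hy2
    have hKy : K₁ + y ≠ 0 := by
      have := lt_of_le_of_lt (le_max_right 0 (-K₁)) hy2
      intro h; linarith
    field_simp
  exact (h5.comp Real.tendsto_log_atTop)

set_option maxHeartbeats 1000000 in
/-- **Balanced growth implies trivial spectrum.**  If `φ` is injective holomorphic on `ℍ`,
satisfies (4.2), has image in `{|z| > e^γ}`, admits a holomorphic logarithm, and satisfies the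
balanced growth condition `|φ′(ξ)| ≍ |φ(ξ)|^{1−ρ}` on `ℍ` for some `ρ > 0`, then `β_∞ ≡ 0`;
consequently `b_∞(t) = 1 − t` for all `t` and `Θ = 1`. -/
theorem balanced_growth_elementary (γ M : ℝ) (hγ : γ ∈ Ioo (0 : ℝ) 1) (hM : 1 ≤ M)
    (φ : ℂ → ℂ) (hd : DifferentiableOn ℂ φ HalfPlane) (hi : InjOn φ HalfPlane)
    (himg : φ '' HalfPlane ⊆ {z : ℂ | Real.exp γ < ‖z‖})
    (h42 : Cond42 φ M γ)
    (hL : ∃ L : ℂ → ℂ, DifferentiableOn ℂ L HalfPlane ∧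
      ∀ z ∈ HalfPlane, Complex.exp (L z) = φ z)
    (ρ c C : ℝ) (hρ : 0 < ρ) (hc : 0 < c) (hcC : c ≤ C)
    (hbal : ∀ ξ ∈ HalfPlane,
      c * (‖φ ξ‖) ^ (1 - ρ) ≤ ‖deriv φ ξ‖ ∧
      ‖deriv φ ξ‖ ≤ C * (‖φ ξ‖) ^ (1 - ρ)) :
    (∀ t : ℝ, betaInf φ t = 0) ∧ (∀ t : ℝ, bInf φ t = 1 - t) ∧ Theta φ = 1 := by
  obtain ⟨L, hLd, hLe⟩ := hL
  obtain ⟨hγ0, hγ1⟩ := hγ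
  have hC : 0 < C := lt_of_lt_of_le hc hcC
  -- basic positivity
  have himg2 : ∀ z ∈ HalfPlane, Real.exp γ < ‖φ z‖ := fun z hz =>
    himg ⟨z, hz, rfl⟩
  have hφpos : ∀ z ∈ HalfPlane, 0 < ‖φ z‖ := fun z hz =>
    lt_trans (Real.exp_pos γ) (himg2 z hz)
  have hφ1 : ∀ z ∈ HalfPlane, 1 < ‖φ z‖ := fun z hz =>
    lt_trans (by simpa using Real.exp_lt_exp.2 hγ0 : (1:ℝ) < Real.exp γ) (himg2 z hz)
  have hreL : ∀ z ∈ HalfPlane, (L z).re = Real.log (‖φ z‖) := by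
    intro z hz
    rw [← hLe z hz, Complex.norm_exp, Real.log_exp]
  have hγre : ∀ z ∈ HalfPlane, γ < (L z).re := by
    intro z hz
    rw [hreL z hz]
    have := himg2 z hz
    have h0 := hφpos z hz
    calc γ = Real.log (Real.exp γ) := (Real.log_exp γ).symm
      _ < Real.log (‖φ z‖) := Real.log_lt_log (Real.exp_pos γ) this
  -- differentiability
  have hφAt : ∀ z ∈ HalfPlane, DifferentiableAt ℂ φ z := fun z hz =>
    hd.differentiableAt (hp_open.mem_nhds hz)
  have hLAt : ∀ z ∈ HalfPlane, DifferentiableAt ℂ L z := fun z hz =>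
    hLd.differentiableAt (hp_open.mem_nhds hz)
  -- derivative of L
  have hderivφ : ∀ z ∈ HalfPlane, deriv φ z = φ z * deriv L z := by
    intro z hz
    have heq : (fun w => Complex.exp (L w)) =ᶠ[𝓝 z] φ :=
      Filter.eventuallyEq_of_mem (hp_open.mem_nhds hz) hLe
    have h1 : HasDerivAt (fun w => Complex.exp (L w))
        (Complex.exp (L z) * deriv L z) z := (hLAt z hz).hasDerivAt.cexp
    rw [← heq.deriv_eq, h1.deriv, hLe z hz]
  have hL'bounds : ∀ z ∈ HalfPlane,
      c * (‖φ z‖) ^ (-ρ) ≤ ‖deriv L z‖ ∧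
      ‖deriv L z‖ ≤ C * (‖φ z‖) ^ (-ρ) := by
    intro z hz
    have hx := hφpos z hz
    have habs : ‖deriv L z‖
        = ‖deriv φ z‖ / ‖φ z‖ := by
      rw [hderivφ z hz, norm_mul]
      field_simp
    obtain ⟨hb1, hb2⟩ := hbal z hz
    constructor
    · rw [habs, ← rpow_one_sub_div hx, ← mul_div_assoc]
      gcongr
    · rw [habs, ← rpow_one_sub_div hx, ← mul_div_assoc]
      gcongr
  -- growth function g = exp(ρ L)
  set g : ℂ → ℂ := fun z => Complex.exp ((ρ:ℂ) * L z) with hg_def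
  have hgAt : ∀ z ∈ HalfPlane,
      HasDerivAt g (Complex.exp ((ρ:ℂ) * L z) * ((ρ:ℂ) * deriv L z)) z := by
    intro z hz
    exact ((hLAt z hz).hasDerivAt.const_mul ((ρ:ℂ))).cexp
  have habsg : ∀ z ∈ HalfPlane, ‖g z‖ = (‖φ z‖) ^ ρ := by
    intro z hz
    rw [hg_def]
    simp only
    rw [Complex.norm_exp]
    have hre2 : ((ρ:ℂ) * L z).re = ρ * (L z).re := by
      simp [Complex.mul_re]
    rw [hre2, hreL z hz, Real.rpow_def_of_pos (hφpos z hz), mul_comm]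
  have hgbound : ∀ z ∈ HalfPlane, ‖deriv g z‖ ≤ ρ * C := by
    intro z hz
    rw [(hgAt z hz).deriv]
    have hx := hφpos z hz
    rw [norm_mul, norm_mul, Complex.norm_real, Real.norm_eq_abs, abs_of_pos hρ]
    have h1 : ‖Complex.exp ((ρ:ℂ) * L z)‖ = (‖φ z‖) ^ ρ :=
      habsg z hz
    rw [h1]
    calc (‖φ z‖) ^ ρ * (ρ * ‖deriv L z‖)
        ≤ (‖φ z‖) ^ ρ * (ρ * (C * (‖φ z‖) ^ (-ρ))) := by
          gcongr
          exact (hL'bounds z hz).2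
      _ = ρ * C * ((‖φ z‖) ^ ρ * (‖φ z‖) ^ (-ρ)) := by ring
      _ = ρ * C := by rw [← Real.rpow_add hx]; simp
  set A := ‖g 1‖ with hA_def
  have hApos : 0 < A := by
    rw [hA_def, hg_def]; exact norm_pos_iff.2 (Complex.exp_ne_zero _)
  have hup : ∀ T : ℝ, 1 ≤ T → (‖φ (T:ℂ)‖) ^ ρ ≤ (A + ρ * C) * T := by
    intro T hT1
    have hT0 : (0:ℝ) < T := by linarith
    have hTmem : (T:ℂ) ∈ HalfPlane := by simp [HalfPlane, hT0]
    have h1mem : (1:ℂ) ∈ HalfPlane := by simp [HalfPlane]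
    have hmvt : ‖g (T:ℂ) - g 1‖ ≤ (ρ*C) * ‖(T:ℂ) - 1‖ :=
      Convex.norm_image_sub_le_of_norm_deriv_le
        (fun z hz => ((hgAt z hz).differentiableAt)) hgbound hp_convex h1mem hTmem
    have hnorm : ‖(T:ℂ) - 1‖ = T - 1 := by
      rw [show (T:ℂ) - 1 = ((T - 1 : ℝ) : ℂ) by push_cast; ring]
      rw [Complex.norm_real, Real.norm_eq_abs, _root_.abs_of_nonneg (by linarith)]
    rw [hnorm] at hmvt
    have htri : ‖g (T:ℂ)‖ - ‖g 1‖ ≤ ‖g (T:ℂ) - g 1‖ := norm_sub_norm_le _ _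
    have habsgT : ‖g (T:ℂ)‖ = (‖φ (T:ℂ)‖) ^ ρ := habsg _ hTmem
    rw [habsgT, ← hA_def] at htri
    nlinarith [hρ, hC, mul_pos hρ hC]
  have hlow : ∀ T : ℝ, 1 ≤ T → c * T ≤
      2 * Real.log (‖φ (T:ℂ)‖) * (‖φ (T:ℂ)‖) ^ ρ := by
    intro T hT1
    have hT0 : (0:ℝ) < T := by linarith
    have hTmem : (T:ℂ) ∈ HalfPlane := by simp [HalfPlane, hT0]
    have hx := hφpos _ hTmem
    have hs := schwarz_step hγ0 hLd hγre hT0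
    rw [hreL _ hTmem] at hs
    have hlb := (hL'bounds _ hTmem).1
    have hkey : c * (‖φ (T:ℂ)‖) ^ (-ρ) ≤
        2 * Real.log (‖φ (T:ℂ)‖) / T := le_trans hlb hs
    rw [le_div_iff₀ hT0] at hkey
    have hxρ : (‖φ (T:ℂ)‖)^(-ρ) * (‖φ (T:ℂ)‖)^ρ = 1 := by
      rw [← Real.rpow_add hx]; simp
    have hρpos : (0:ℝ) < (‖φ (T:ℂ)‖)^ρ := Real.rpow_pos_of_pos hx ρ
    calc c * T = c * (‖φ (T:ℂ)‖)^(-ρ) * T * (‖φ (T:ℂ)‖)^ρ := by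
          rw [show c * (‖φ (T:ℂ)‖)^(-ρ) * T * (‖φ (T:ℂ)‖)^ρ
            = c * T * ((‖φ (T:ℂ)‖)^(-ρ) * (‖φ (T:ℂ)‖)^ρ) by ring,
            hxρ, mul_one]
      _ ≤ 2 * Real.log (‖φ (T:ℂ)‖) * (‖φ (T:ℂ)‖)^ρ := by
          gcongr
  have hrγ : ∀ T : ℝ, 1 ≤ T → γ < Real.log (‖φ (T:ℂ)‖) := by
    intro T hT1
    have hTmem : (T:ℂ) ∈ HalfPlane := by simp [HalfPlane]; linarith
    rw [← hreL _ hTmem]; exact hγre _ hTmem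
  set K₁ := Real.log (A + ρ * C) with hK₁_def
  have hAC : 0 < A + ρ * C := by positivity
  have hrup : ∀ T : ℝ, 1 ≤ T →
      ρ * Real.log (‖φ (T:ℂ)‖) ≤ K₁ + Real.log T := by
    intro T hT1
    have hT0 : (0:ℝ) < T := by linarith
    have hTmem : (T:ℂ) ∈ HalfPlane := by simp [HalfPlane, hT0]
    have hx := hφpos _ hTmem
    have := Real.log_le_log (Real.rpow_pos_of_pos hx ρ) (hup T hT1)
    rwa [Real.log_rpow hx, Real.log_mul hAC.ne' hT0.ne'] at this
  have hrlow : ∀ T : ℝ, 1 ≤ T →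
      Real.log c + Real.log T ≤ Real.log 2 +
        Real.log (Real.log (‖φ (T:ℂ)‖)) +
        ρ * Real.log (‖φ (T:ℂ)‖) := by
    intro T hT1
    have hT0 : (0:ℝ) < T := by linarith
    have hTmem : (T:ℂ) ∈ HalfPlane := by simp [HalfPlane, hT0]
    have hx := hφpos _ hTmem
    have hlogP : 0 < Real.log (‖φ (T:ℂ)‖) := lt_trans hγ0 (hrγ T hT1)
    have := Real.log_le_log (by positivity) (hlow T hT1)
    rwa [Real.log_mul hc.ne' hT0.ne',
      Real.log_mul (by positivity) (Real.rpow_pos_of_pos hx ρ).ne',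
      Real.log_mul (by norm_num) hlogP.ne', Real.log_rpow hx] at this
  have hratio : Tendsto
      (fun T : ℝ => ρ * Real.log (‖φ (T:ℂ)‖) / Real.log T) atTop (𝓝 1) := by
    have hhit : Tendsto (fun T : ℝ => (K₁ + Real.log T) / Real.log T) atTop (𝓝 1) := by
      have h3 : Tendsto (fun T : ℝ => K₁ / Real.log T) atTop (𝓝 0) :=
        tendsto_const_nhds.div_atTop Real.tendsto_log_atTop
      have h4 : Tendsto (fun T : ℝ => K₁ / Real.log T + 1) atTop (𝓝 (0 + 1)) :=
        h3.add tendsto_const_nhds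
      rw [zero_add] at h4
      apply h4.congr'
      filter_upwards [Real.tendsto_log_atTop.eventually_gt_atTop 0] with T hT
      field_simp
    have hlot : Tendsto (fun T : ℝ =>
        (Real.log c - Real.log 2 + Real.log ρ - Real.log (K₁ + Real.log T) + Real.log T)
          / Real.log T) atTop (𝓝 1) := by
      have h1 : Tendsto (fun T : ℝ =>
          (Real.log c - Real.log 2 + Real.log ρ) / Real.log T) atTop (𝓝 0) :=
        tendsto_const_nhds.div_atTop Real.tendsto_log_atTop
      have h2 := log_ratio_tendsto K₁
      have h5 : Tendsto (fun T : ℝ =>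
          (Real.log c - Real.log 2 + Real.log ρ) / Real.log T
            - Real.log (K₁ + Real.log T) / Real.log T + 1) atTop (𝓝 (0 - 0 + 1)) :=
        (h1.sub h2).add tendsto_const_nhds
      norm_num at h5
      apply h5.congr'
      filter_upwards [Real.tendsto_log_atTop.eventually_gt_atTop 0] with T hT
      field_simp
    apply tendsto_of_tendsto_of_tendsto_of_le_of_le' hlot hhit
    · filter_upwards [eventually_ge_atTop (3:ℝ)] with T hT3
      have hT1 : (1:ℝ) ≤ T := by linarith
      have hlogT : 0 < Real.log T := Real.log_pos (by linarith)
      have hlogP : 0 < Real.log (‖φ (T:ℂ)‖) := lt_trans hγ0 (hrγ T hT1)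
      have hKl : ρ * Real.log (‖φ (T:ℂ)‖) ≤ K₁ + Real.log T := hrup T hT1
      have hKlpos : 0 < K₁ + Real.log T := lt_of_lt_of_le (by positivity) hKl
      have hlogle : Real.log (Real.log (‖φ (T:ℂ)‖))
          ≤ Real.log (K₁ + Real.log T) - Real.log ρ := by
        have hle : Real.log (‖φ (T:ℂ)‖) ≤ (K₁ + Real.log T) / ρ := by
          rw [le_div_iff₀ hρ]; linarith [hKl]
        have := Real.log_le_log hlogP hle
        rwa [Real.log_div hKlpos.ne' hρ.ne'] at this
      have hnum : Real.log c - Real.log 2 + Real.log ρ - Real.log (K₁ + Real.log T)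
          + Real.log T ≤ ρ * Real.log (‖φ (T:ℂ)‖) := by
        have := hrlow T hT1
        linarith
      exact div_le_div_of_nonneg_right hnum hlogT.le
    · filter_upwards [eventually_ge_atTop (3:ℝ)] with T hT3
      have hT1 : (1:ℝ) ≤ T := by linarith
      have hlogT : 0 < Real.log T := Real.log_pos (by linarith)
      exact div_le_div_of_nonneg_right (hrup T hT1) hlogT.le
  -- the constant K and the key per-t estimate
  have hM0 : (0:ℝ) < M := lt_of_lt_of_le one_pos hM
  set K : ℝ := M ^ |1 - ρ| with hK_def
  have hK1 : 1 ≤ K := by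
    rw [hK_def]
    calc (1:ℝ) = M ^ (0:ℝ) := (Real.rpow_zero M).symm
      _ ≤ M ^ |1 - ρ| := Real.rpow_le_rpow_of_exponent_le hM (abs_nonneg _)
  have hKpos : 0 < K := lt_of_lt_of_le one_pos hK1
  have key : ∀ t : ℝ, ∀ T : ℝ, 3 ≤ T →
      |betaT φ T (1/T) t - t * (1 - ρ * Real.log (‖φ (T:ℂ)‖) / Real.log T)|
        ≤ (Real.log 2 + |t| * (|Real.log (c/K)| + |Real.log (C*K)|)) / Real.log T := by
    intro t T hT3
    have hT0 : (0:ℝ) < T := by linarith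
    have hT1 : (1:ℝ) ≤ T := by linarith
    have hγT : γ ≤ T := by linarith
    have hlogT : 0 < Real.log T := Real.log_pos (by linarith)
    have hTmem : (T:ℂ) ∈ HalfPlane := by simp [HalfPlane, hT0]
    set PT := ‖φ (T:ℂ)‖ with hPT_def
    have hPTpos : 0 < PT := hφpos _ hTmem
    have hTQ : (T:ℂ) ∈ Q T \ Q (T/8) := by
      constructor
      · refine ⟨?_, ?_, ?_, ?_⟩ <;>
          simp only [Complex.ofReal_re, Complex.ofReal_im] <;> linarith
      · intro h
        have h2 := h.2.1
        simp only [Complex.ofReal_re] at h2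
        linarith
    have hw_re : ∀ x : ℝ, ((1:ℂ) + (x:ℂ) * Complex.I).re = 1 := by intro x; simp
    have hw_im : ∀ x : ℝ, ((1:ℂ) + (x:ℂ) * Complex.I).im = x := by intro x; simp
    have hwmem : ∀ y : ℝ, ((1:ℂ) + ((T*y:ℝ):ℂ) * Complex.I) ∈ HalfPlane := by
      intro y
      show 0 < ((1:ℂ) + ((T*y:ℝ):ℂ) * Complex.I).re
      rw [hw_re]; norm_num
    have hycases : ∀ y ∈ Iset, (1 ≤ y ∧ y ≤ 2) ∨ (-2 ≤ y ∧ y ≤ -1) := by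
      intro y hy
      rcases hy with h | h
      · right; exact ⟨h.1, h.2⟩
      · left; exact ⟨h.1, h.2⟩
    have hwQ : ∀ y ∈ Iset, ((1:ℂ) + ((T*y:ℝ):ℂ) * Complex.I) ∈ Q T \ Q (T/8) := by
      intro y hy
      constructor
      · refine ⟨?_, ?_, ?_, ?_⟩
        · rw [hw_re]; norm_num
        · rw [hw_re]; linarith
        · rw [hw_im]
          rcases hycases y hy with ⟨h1, h2⟩ | ⟨h1, h2⟩ <;> nlinarith
        · rw [hw_im]
          rcases hycases y hy with ⟨h1, h2⟩ | ⟨h1, h2⟩ <;> nlinarith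
      · intro hmem
        obtain ⟨-, -, hm1, hm2⟩ := hmem
        rw [hw_im] at hm1 hm2
        rcases hycases y hy with ⟨h1, h2⟩ | ⟨h1, h2⟩
        · nlinarith
        · nlinarith
    have h42a : ∀ y ∈ Iset,
        ‖φ ((1:ℂ) + ((T*y:ℝ):ℂ) * Complex.I)‖ ≤ M * PT :=
      fun y hy => h42 T hγT _ (hwQ y hy) _ hTQ
    have h42b : ∀ y ∈ Iset,
        PT ≤ M * ‖φ ((1:ℂ) + ((T*y:ℝ):ℂ) * Complex.I)‖ :=
      fun y hy => h42 T hγT _ hTQ _ (hwQ y hy)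
    -- the derivative formula
    have hG : ∀ y : ℝ, deriv (resc φ T) (((1/T : ℝ):ℂ) + (y:ℂ) * Complex.I)
        = deriv φ ((1:ℂ) + ((T*y:ℝ):ℂ) * Complex.I) * (T:ℂ) / ((PT:ℝ):ℂ) := by
      intro y
      set z₀ : ℂ := ((1/T : ℝ):ℂ) + (y:ℂ) * Complex.I with hz₀_def
      have hz0 : (T:ℂ) * z₀ = (1:ℂ) + ((T*y:ℝ):ℂ) * Complex.I := by
        rw [hz₀_def]
        push_cast
        have : (T:ℂ) ≠ 0 := by
          simpa using (Complex.ofReal_ne_zero.2 hT0.ne')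
        field_simp
      have hφw : DifferentiableAt ℂ φ ((1:ℂ) + ((T*y:ℝ):ℂ) * Complex.I) :=
        hφAt _ (hwmem y)
      have hφw' : HasDerivAt φ (deriv φ ((1:ℂ) + ((T*y:ℝ):ℂ) * Complex.I)) ((T:ℂ) * z₀) := by
        rw [hz0]; exact hφw.hasDerivAt
      have hlin : HasDerivAt (fun z : ℂ => (T:ℂ) * z) (T:ℂ) z₀ := by
        simpa using (hasDerivAt_id z₀).const_mul (T:ℂ)
      have hres : HasDerivAt (resc φ T)
          (deriv φ ((1:ℂ) + ((T*y:ℝ):ℂ) * Complex.I) * (T:ℂ) / ((PT:ℝ):ℂ)) z₀ := by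
        have h2 := (hφw'.comp z₀ hlin).div_const (((PT:ℝ)):ℂ)
        exact h2
      exact hres.deriv
    have hGabs : ∀ y : ℝ,
        ‖deriv (resc φ T) (((1/T:ℝ):ℂ) + (y:ℂ) * Complex.I)‖
        = T * ‖deriv φ ((1:ℂ) + ((T*y:ℝ):ℂ) * Complex.I)‖ / PT := by
      intro y
      rw [hG y, norm_div, norm_mul, Complex.norm_real, Real.norm_eq_abs, Complex.norm_real, Real.norm_eq_abs,
        _root_.abs_of_pos hT0, _root_.abs_of_pos hPTpos]
      ring
    -- bounds on the rescaled derivative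
    set aT := (c/K) * (T * PT ^ (-ρ)) with haT_def
    set bT := (C*K) * (T * PT ^ (-ρ)) with hbT_def
    have hPTρ : 0 < PT ^ (-ρ) := Real.rpow_pos_of_pos hPTpos _
    have haTpos : 0 < aT := by rw [haT_def]; positivity
    have hbTpos : 0 < bT := by rw [hbT_def]; positivity
    have hK0 : K ≠ 0 := ne_of_gt hKpos
    have hPT0 : PT ≠ 0 := ne_of_gt hPTpos
    have hbound : ∀ y ∈ Iset,
        aT ≤ T * ‖deriv φ ((1:ℂ) + ((T*y:ℝ):ℂ) * Complex.I)‖ / PT ∧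
        T * ‖deriv φ ((1:ℂ) + ((T*y:ℝ):ℂ) * Complex.I)‖ / PT ≤ bT := by
      intro y hy
      have hwm := hwmem y
      have hX := hφpos _ hwm
      obtain ⟨hb1, hb2⟩ := hbal _ hwm
      obtain ⟨hr1, hr2⟩ := rpow_ratio_bound hX hPTpos hM (h42a y hy) (h42b y hy)
      have hKinv : M ^ (-|1-ρ|) = K⁻¹ := by
        rw [hK_def, Real.rpow_neg hM0.le]
      rw [hKinv] at hr1
      rw [← hK_def] at hr2
      constructor
      · have h1 : c * (K⁻¹ * PT^(1-ρ)) ≤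
            ‖deriv φ ((1:ℂ) + ((T*y:ℝ):ℂ) * Complex.I)‖ := by
          calc c * (K⁻¹ * PT^(1-ρ))
              ≤ c * (‖φ ((1:ℂ) + ((T*y:ℝ):ℂ) * Complex.I)‖)^(1-ρ) :=
              mul_le_mul_of_nonneg_left hr1 hc.le
            _ ≤ _ := hb1
        calc aT = T * (c * (K⁻¹ * PT^(1-ρ))) / PT := by
              rw [haT_def, ← rpow_one_sub_div hPTpos]; ring
          _ ≤ T * ‖deriv φ ((1:ℂ) + ((T*y:ℝ):ℂ) * Complex.I)‖ / PT :=
              div_le_div_of_nonneg_right (mul_le_mul_of_nonneg_left h1 hT0.le) hPTpos.le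
      · have h2 : ‖deriv φ ((1:ℂ) + ((T*y:ℝ):ℂ) * Complex.I)‖
            ≤ C * (K * PT^(1-ρ)) := by
          calc ‖deriv φ ((1:ℂ) + ((T*y:ℝ):ℂ) * Complex.I)‖
              ≤ C * (‖φ ((1:ℂ) + ((T*y:ℝ):ℂ) * Complex.I)‖)^(1-ρ) := hb2
            _ ≤ C * (K * PT^(1-ρ)) := mul_le_mul_of_nonneg_left hr2 hC.le
        calc T * ‖deriv φ ((1:ℂ) + ((T*y:ℝ):ℂ) * Complex.I)‖ / PT
            ≤ T * (C * (K * PT^(1-ρ))) / PT :=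
              div_le_div_of_nonneg_right (mul_le_mul_of_nonneg_left h2 hT0.le) hPTpos.le
          _ = bT := by rw [hbT_def, ← rpow_one_sub_div hPTpos]; ring
    -- continuity and integrability
    have hcontw : Continuous (fun y : ℝ => (1:ℂ) + ((T*y:ℝ):ℂ) * Complex.I) := by
      continuity
    have hdc : ContinuousOn (deriv φ) HalfPlane :=
      ((hd.analyticOnNhd hp_open).deriv).continuousOn
    have hcontG : ContinuousOn (fun y : ℝ =>
        T * ‖deriv φ ((1:ℂ) + ((T*y:ℝ):ℂ) * Complex.I)‖ / PT) Iset := by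
      apply ContinuousOn.div_const
      apply ContinuousOn.mul continuousOn_const
      exact continuous_norm.comp_continuousOn
        (hdc.comp hcontw.continuousOn (fun y _ => hwmem y))
    have hcontf : ContinuousOn (fun y : ℝ =>
        (‖deriv (resc φ T) (((1/T:ℝ):ℂ) + (y:ℂ) * Complex.I)‖)^t) Iset := by
      have h1 : ContinuousOn (fun y : ℝ =>
          (T * ‖deriv φ ((1:ℂ) + ((T*y:ℝ):ℂ) * Complex.I)‖ / PT) ^ t) Iset :=
        hcontG.rpow_const (fun y hy =>
          Or.inl (ne_of_gt (lt_of_lt_of_le haTpos (hbound y hy).1)))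
      exact h1.congr (fun y hy => by rw [hGabs y])
    have hintf : IntegrableOn (fun y : ℝ =>
        (‖deriv (resc φ T) (((1/T:ℝ):ℂ) + (y:ℂ) * Complex.I)‖)^t) Iset :=
      hcontf.integrableOn_compact iset_compact
    have hfl : ∀ y ∈ Iset,
        min (aT^t) (bT^t) ≤
          (‖deriv (resc φ T) (((1/T:ℝ):ℂ) + (y:ℂ) * Complex.I)‖)^t ∧
        (‖deriv (resc φ T) (((1/T:ℝ):ℂ) + (y:ℂ) * Complex.I)‖)^t ≤
          max (aT^t) (bT^t) := by
      intro y hy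
      rw [hGabs y]
      obtain ⟨h1, h2⟩ := hbound y hy
      rcases le_or_gt 0 t with ht | ht
      · exact ⟨le_trans (min_le_left _ _) (Real.rpow_le_rpow haTpos.le h1 ht),
          le_trans (Real.rpow_le_rpow (le_trans haTpos.le h1) h2 ht) (le_max_right _ _)⟩
      · exact ⟨le_trans (min_le_right _ _)
            (Real.rpow_le_rpow_of_nonpos (lt_of_lt_of_le haTpos h1) h2 ht.le),
          le_trans (Real.rpow_le_rpow_of_nonpos haTpos h1 ht.le) (le_max_left _ _)⟩
    have hvol : volume Iset < ⊤ := iset_compact.measure_lt_top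
    have hIlo : 2 * min (aT^t) (bT^t) ≤ ∫ y in Iset,
        (‖deriv (resc φ T) (((1/T:ℝ):ℂ) + (y:ℂ) * Complex.I)‖)^t := by
      have h := setIntegral_mono_on ((integrableOn_const hvol.ne)) hintf iset_meas
        (fun y hy => (hfl y hy).1)
      rwa [setIntegral_const, measureReal_def, iset_volume, smul_eq_mul] at h
    have hIhi : (∫ y in Iset,
        (‖deriv (resc φ T) (((1/T:ℝ):ℂ) + (y:ℂ) * Complex.I)‖)^t)
          ≤ 2 * max (aT^t) (bT^t) := by
      have h := setIntegral_mono_on hintf ((integrableOn_const hvol.ne)) iset_meas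
        (fun y hy => (hfl y hy).2)
      rwa [setIntegral_const, measureReal_def, iset_volume, smul_eq_mul] at h
    have hminpos : 0 < min (aT^t) (bT^t) :=
      lt_min (Real.rpow_pos_of_pos haTpos t) (Real.rpow_pos_of_pos hbTpos t)
    have hIpos : 0 < ∫ y in Iset,
        (‖deriv (resc φ T) (((1/T:ℝ):ℂ) + (y:ℂ) * Complex.I)‖)^t :=
      lt_of_lt_of_le (by linarith) hIlo
    -- logs
    have hlogaT : Real.log aT = Real.log (c/K) + (Real.log T - ρ * Real.log PT) := by
      rw [haT_def, Real.log_mul (by positivity) (by positivity),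
        Real.log_mul hT0.ne' hPTρ.ne', Real.log_rpow hPTpos]
      ring
    have hlogbT : Real.log bT = Real.log (C*K) + (Real.log T - ρ * Real.log PT) := by
      rw [hbT_def, Real.log_mul (by positivity) (by positivity),
        Real.log_mul hT0.ne' hPTρ.ne', Real.log_rpow hPTpos]
      ring
    set q := t * (Real.log T - ρ * Real.log PT) with hq_def
    set E := |Real.log (c/K)| + |Real.log (C*K)| with hE_def
    clear_value q E
    have hEa : t * Real.log (c/K) ≤ |t| * E ∧ -(|t| * E) ≤ t * Real.log (c/K) := by
      constructor
      · calc t * Real.log (c/K) ≤ |t * Real.log (c/K)| := le_abs_self _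
          _ = |t| * |Real.log (c/K)| := abs_mul _ _
          _ ≤ |t| * E := by
              rw [hE_def]
              have := abs_nonneg (Real.log (C*K))
              nlinarith [abs_nonneg t]
      · have h := neg_abs_le (t * Real.log (c/K))
        have h2 : |t * Real.log (c/K)| ≤ |t| * E := by
          rw [abs_mul, hE_def]
          have := abs_nonneg (Real.log (C*K))
          nlinarith [abs_nonneg t]
        linarith
    have hEb : t * Real.log (C*K) ≤ |t| * E ∧ -(|t| * E) ≤ t * Real.log (C*K) := by
      constructor
      · calc t * Real.log (C*K) ≤ |t * Real.log (C*K)| := le_abs_self _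
          _ = |t| * |Real.log (C*K)| := abs_mul _ _
          _ ≤ |t| * E := by
              rw [hE_def]
              have := abs_nonneg (Real.log (c/K))
              nlinarith [abs_nonneg t]
      · have h := neg_abs_le (t * Real.log (C*K))
        have h2 : |t * Real.log (C*K)| ≤ |t| * E := by
          rw [abs_mul, hE_def]
          have := abs_nonneg (Real.log (c/K))
          nlinarith [abs_nonneg t]
        linarith
    have hmaxle : Real.log (max (aT^t) (bT^t)) ≤ q + |t| * E := by
      rcases max_cases (aT^t) (bT^t) with ⟨he, -⟩ | ⟨he, -⟩ <;> rw [he]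
      · rw [Real.log_rpow haTpos, hlogaT, mul_add]
        linarith [hEa.1]
      · rw [Real.log_rpow hbTpos, hlogbT, mul_add]
        linarith [hEb.1]
    have hminge : q - |t| * E ≤ Real.log (min (aT^t) (bT^t)) := by
      rcases min_cases (aT^t) (bT^t) with ⟨he, -⟩ | ⟨he, -⟩ <;> rw [he]
      · rw [Real.log_rpow haTpos, hlogaT, mul_add]
        linarith [hEa.2]
      · rw [Real.log_rpow hbTpos, hlogbT, mul_add]
        linarith [hEb.2]
    have hlog2 : (0:ℝ) < Real.log 2 := Real.log_pos (by norm_num)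
    have hlogIv_hi : Real.log (∫ y in Iset,
        (‖deriv (resc φ T) (((1/T:ℝ):ℂ) + (y:ℂ) * Complex.I)‖)^t)
          ≤ Real.log 2 + (q + |t| * E) := by
      have h := Real.log_le_log hIpos hIhi
      rw [Real.log_mul (by norm_num : (2:ℝ) ≠ 0)
        (ne_of_gt (lt_of_lt_of_le hminpos min_le_max))] at h
      linarith [hmaxle]
    have hlogIv_lo : Real.log 2 + (q - |t| * E) ≤ Real.log (∫ y in Iset,
        (‖deriv (resc φ T) (((1/T:ℝ):ℂ) + (y:ℂ) * Complex.I)‖)^t) := by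
      have h := Real.log_le_log (by linarith : (0:ℝ) < 2 * min (aT^t) (bT^t)) hIlo
      rw [Real.log_mul (by norm_num : (2:ℝ) ≠ 0) hminpos.ne'] at h
      linarith [hminge]
    -- conclude the key estimate
    have hbeta : betaT φ T (1/T) t = Real.log (∫ y in Iset,
        (‖deriv (resc φ T) (((1/T:ℝ):ℂ) + (y:ℂ) * Complex.I)‖)^t)
          / Real.log T := by
      rw [betaT, one_div_one_div]
    rw [hbeta]
    have hqT : t * (1 - ρ * Real.log PT / Real.log T) = q / Real.log T := by
      rw [hq_def]; field_simp
    rw [hqT, ← sub_div]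
    rw [abs_div, _root_.abs_of_pos hlogT]
    apply div_le_div_of_nonneg_right _ hlogT.le
    rw [abs_le]
    constructor
    · linarith [hlogIv_lo]
    · linarith [hlogIv_hi]
  -- conclusion
  have hbeta0 : ∀ t : ℝ, betaInf φ t = 0 := by
    intro t
    have htends : Tendsto (fun T : ℝ => betaT φ T (1/T) t) atTop (𝓝 0) := by
      set D := Real.log 2 + |t| * (|Real.log (c/K)| + |Real.log (C*K)|) with hD_def
      have hDT : Tendsto (fun T : ℝ => D / Real.log T) atTop (𝓝 0) :=
        tendsto_const_nhds.div_atTop Real.tendsto_log_atTop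
      have hmain : Tendsto (fun T : ℝ =>
          t * (1 - ρ * Real.log (‖φ (T:ℂ)‖) / Real.log T)) atTop (𝓝 0) := by
        have h1 := ((tendsto_const_nhds (x := (1:ℝ))).sub hratio).const_mul t
        simpa using h1
      have hlo := hmain.sub hDT
      have hhi := hmain.add hDT
      rw [sub_zero] at hlo
      rw [add_zero] at hhi
      apply tendsto_of_tendsto_of_tendsto_of_le_of_le' hlo hhi
      · filter_upwards [eventually_ge_atTop (3:ℝ)] with T h3
        have h := key t T h3
        rw [abs_le] at h
        linarith [h.1]
      · filter_upwards [eventually_ge_atTop (3:ℝ)] with T h3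
        have h := key t T h3
        rw [abs_le] at h
        linarith [h.2]
    exact htends.limsup_eq
  refine ⟨hbeta0, fun t => by rw [bInf, hbeta0 t]; ring, ?_⟩
  have hset : {t : ℝ | 0 < t ∧ bInf φ t ≤ 0} = Ici 1 := by
    ext x
    simp only [mem_setOf_eq, mem_Ici, bInf, hbeta0 x]
    constructor
    · rintro ⟨h1, h2⟩; linarith
    · intro h; exact ⟨by linarith, by linarith⟩
  rw [Theta, hset, csInf_Ici]
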